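/- Let L_δ, Λ_δ, L₀, Λ₀ : V → V all be linear, self-adjoint, and positive semidefinite, with ⟨Λ₀ f, g⟩ ≤ K ‖f‖ ‖g‖ for all f, g ∈ V and with ‖(Λ_δ − Λ₀) v‖ ≤ C_a δ² ‖v‖ for all v ∈ V, where K, C_a ≥ 0 and δ > 0. Let u^δ, u⁰ : [0, T] → V be differentiable, satisfy (u^δ)'(t) = −ε L_δ u^δ(t) − (1/ε) W'(u^δ(t)) − γ Λ_δ(u^δ(t) − ω𝟙) − M ⟨u^δ(t) − ω𝟙, 𝟙⟩ 𝟙 and (u⁰)'(t) = −ε L₀ u⁰(t) − (1/ε) W'(u⁰(t)) − γ Λ₀(u⁰(t) − ω𝟙) − M ⟨u⁰(t) − ω𝟙, 𝟙⟩ 𝟙 with the same initial data u^δ(0) = u⁰(0), and suppose that ‖(L_δ − L₀) u⁰(t)‖ ≤ C_b δ² and ‖u^δ(t) − ω𝟙‖ ≤ R for all t ∈ [0, T], where C_b, R ≥ 0. Then for every t ∈ [0, T], ‖u^δ(t) − u⁰(t)‖ ≤ ((ε C_b + γ C_a R) δ² / C₃)(e^{C₃ t} − 1), where C₃ = L_W/ε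 + γ K + M |Ω| > 0. In particular ‖u^δ(t) − u⁰(t)‖ ≤ C δ² with C independent of δ. -/

import Mathlib

open Real
open scoped RealInnerProductSpace

/-- Discrete inner product `⟨f, g⟩ = c · Σ_j f_j g_j` on `V = Fin m → ℝ`. -/
noncomputable def dip (m : ℕ) (c : ℝ) (f g : Fin m → ℝ) : ℝ :=
  c * ∑ j, f j * g j

/-- Discrete norm induced by `dip`. -/
noncomputable def dnorm (m : ℕ) (c : ℝ) (f : Fin m → ℝ) : ℝ :=
  Real.sqrt (dip m c f f)

/-- The all-ones vector `𝟙`. -/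
def ones (m : ℕ) : Fin m → ℝ := fun _ => 1

/-- The identification of `Fin m → ℝ` with Euclidean space. -/
noncomputable def eqE (m : ℕ) : (Fin m → ℝ) ≃L[ℝ] EuclideanSpace ℝ (Fin m) :=
  (PiLp.continuousLinearEquiv 2 ℝ (fun _ : Fin m => ℝ)).symm

lemma inner_eqE {m : ℕ} (v w : Fin m → ℝ) :
    (inner ℝ (eqE m v) (eqE m w) : ℝ) = ∑ j, v j * w j := by
  simp [eqE, PiLp.inner_apply, RCLike.inner_apply, mul_comm]

lemma dip_eqE {m : ℕ} {c : ℝ} (v w : Fin m → ℝ) :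
    dip m c v w = c * (inner ℝ (eqE m v) (eqE m w) : ℝ) := by
  rw [dip, inner_eqE]

lemma dnorm_eqE {m : ℕ} {c : ℝ} (hc : 0 < c) (v : Fin m → ℝ) :
    dnorm m c v = Real.sqrt c * ‖eqE m v‖ := by
  rw [dnorm, dip_eqE, real_inner_self_eq_norm_sq, Real.sqrt_mul hc.le,
    Real.sqrt_sq (norm_nonneg _)]

lemma dip_sub_left {m : ℕ} {c : ℝ} (f g h : Fin m → ℝ) :
    dip m c (f - g) h = dip m c f h - dip m c g h := by
  simp [dip, sub_mul, Finset.sum_sub_distrib, mul_sub]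

set_option maxHeartbeats 2000000
theorem semidiscrete_pNACOK_asymptotic_compatibility (m : ℕ) (hm : 1 ≤ m)
    (c : ℝ) (hc : 0 < c)
    (Lδ Λδ L0 Λ0 : (Fin m → ℝ) →ₗ[ℝ] (Fin m → ℝ))
    (hLδsa : ∀ f g, dip m c (Lδ f) g = dip m c f (Lδ g))
    (hLδpsd : ∀ f, 0 ≤ dip m c (Lδ f) f)
    (hΛδsa : ∀ f g, dip m c (Λδ f) g = dip m c f (Λδ g))
    (hΛδpsd : ∀ f, 0 ≤ dip m c (Λδ f) f)
    (hL0sa : ∀ f g, dip m c (L0 f) g = dip m c f (L0 g))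
    (hL0psd : ∀ f, 0 ≤ dip m c (L0 f) f)
    (hΛ0sa : ∀ f g, dip m c (Λ0 f) g = dip m c f (Λ0 g))
    (hΛ0psd : ∀ f, 0 ≤ dip m c (Λ0 f) f)
    (K : ℝ) (hK : 0 ≤ K)
    (hΛ0bdd : ∀ f g, dip m c (Λ0 f) g ≤ K * dnorm m c f * dnorm m c g)
    (Ca : ℝ) (hCa : 0 ≤ Ca) (δ : ℝ) (hδ : 0 < δ)
    (hΛclose : ∀ v : Fin m → ℝ, dnorm m c (Λδ v - Λ0 v) ≤ Ca * δ ^ 2 * dnorm m c v)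
    (W : ℝ → ℝ) (hW : ContDiff ℝ 2 W)
    (LW : ℝ) (hLW : 0 < LW) (hW2 : ∀ s : ℝ, |deriv (deriv W) s| ≤ LW)
    (ε γ M : ℝ) (hε : 0 < ε) (hγ : 0 < γ) (hM : 0 < M) (ω : ℝ)
    (T : ℝ) (hT : 0 < T)
    (uδ u0 : ℝ → (Fin m → ℝ))
    (hodeδ : ∀ t ∈ Set.Icc (0:ℝ) T, HasDerivAt uδ
      (-(ε • Lδ (uδ t)) - (1 / ε) • (fun j => deriv W (uδ t j))
        - γ • Λδ (uδ t - ω • ones m)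
        - (M * dip m c (uδ t - ω • ones m) (ones m)) • ones m) t)
    (hode0 : ∀ t ∈ Set.Icc (0:ℝ) T, HasDerivAt u0
      (-(ε • L0 (u0 t)) - (1 / ε) • (fun j => deriv W (u0 t j))
        - γ • Λ0 (u0 t - ω • ones m)
        - (M * dip m c (u0 t - ω • ones m) (ones m)) • ones m) t)
    (hinit : uδ 0 = u0 0)
    (Cb : ℝ) (hCb : 0 ≤ Cb)
    (hLclose : ∀ t ∈ Set.Icc (0:ℝ) T, dnorm m c (Lδ (u0 t) - L0 (u0 t)) ≤ Cb * δ ^ 2)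
    (R : ℝ) (hR : 0 ≤ R)
    (hubdd : ∀ t ∈ Set.Icc (0:ℝ) T, dnorm m c (uδ t - ω • ones m) ≤ R) :
    ∀ t ∈ Set.Icc (0:ℝ) T,
      dnorm m c (uδ t - u0 t)
        ≤ ((ε * Cb + γ * Ca * R) * δ ^ 2 / (LW / ε + γ * K + M * (c * m)))
            * (Real.exp ((LW / ε + γ * K + M * (c * m)) * t) - 1) := by
  classical
  -- Lipschitz bound on `deriv W`
  have hW' : ∀ a b : ℝ, |deriv W a - deriv W b| ≤ LW * |a - b| := by
    have hd : Differentiable ℝ (deriv W) := by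
      have h2 : ContDiff ℝ ((1 : WithTop ℕ∞) + 1) W := by convert hW using 2; exact one_add_one_eq_two
      exact ((contDiff_succ_iff_deriv.mp h2).2.2).differentiable one_ne_zero
    have hlip : LipschitzWith LW.toNNReal (deriv W) := by
      apply lipschitzWith_of_nnnorm_deriv_le hd
      intro x
      rw [← NNReal.coe_le_coe, coe_nnnorm, Real.coe_toNNReal _ hLW.le, Real.norm_eq_abs]
      exact hW2 x
    intro a b
    have := hlip.dist_le_mul a b
    rwa [Real.dist_eq, Real.dist_eq, Real.coe_toNNReal _ hLW.le] at this
  set C3 : ℝ := LW / ε + γ * K + M * (c * m) with hC3def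
  have hm' : (1 : ℝ) ≤ (m : ℝ) := by exact_mod_cast hm
  have hC3 : 0 < C3 := by
    have h1 : 0 < LW / ε := div_pos hLW hε
    have h2 : 0 ≤ γ * K := mul_nonneg hγ.le hK
    have h3 : 0 ≤ M * (c * m) := by positivity
    simp only [hC3def]; linarith
  have hsc : 0 < Real.sqrt c := Real.sqrt_pos.mpr hc
  set E' : ℝ := (ε * Cb + γ * Ca * R) * δ ^ 2 / Real.sqrt c with hE'def
  have hE'nonneg : 0 ≤ E' := by
    apply div_nonneg _ hsc.le
    have : 0 ≤ ε * Cb + γ * Ca * R := by positivity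
    positivity
  -- the difference, viewed in Euclidean space
  set w : ℝ → EuclideanSpace ℝ (Fin m) := fun s => eqE m (uδ s - u0 s) with hwdef
  have hws : ∀ s, w s = eqE m (uδ s - u0 s) := fun _ => rfl
  -- decomposition of the derivative of the difference
  set A : ℝ → (Fin m → ℝ) := fun s =>
    (-ε) • (Lδ (u0 s) - L0 (u0 s)) +
    (-γ) • (Λδ (uδ s - ω • ones m) - Λ0 (uδ s - ω • ones m)) with hAdef
  set B : ℝ → (Fin m → ℝ) := fun s =>
    (-ε) • (Lδ (uδ s) - Lδ (u0 s)) +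
    (-(1/ε)) • ((fun j => deriv W (uδ s j)) - (fun j => deriv W (u0 s j))) +
    (-γ) • (Λ0 (uδ s - ω • ones m) - Λ0 (u0 s - ω • ones m)) +
    (-(M * (dip m c (uδ s - ω • ones m) (ones m)
      - dip m c (u0 s - ω • ones m) (ones m)))) • ones m with hBdef
  have hw' : ∀ s ∈ Set.Icc (0:ℝ) T, HasDerivAt w (eqE m (B s + A s)) s := by
    intro s hs
    have h := (hodeδ s hs).sub (hode0 s hs)
    have hBA :
        (-(ε • Lδ (uδ s)) - (1 / ε) • (fun j => deriv W (uδ s j))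
          - γ • Λδ (uδ s - ω • ones m)
          - (M * dip m c (uδ s - ω • ones m) (ones m)) • ones m)
        - (-(ε • L0 (u0 s)) - (1 / ε) • (fun j => deriv W (u0 s j))
          - γ • Λ0 (u0 s - ω • ones m)
          - (M * dip m c (u0 s - ω • ones m) (ones m)) • ones m)
        = B s + A s := by
      simp only [hAdef, hBdef]
      module
    rw [hBA] at h
    exact (eqE m).toContinuousLinearMap.hasFDerivAt.comp_hasDerivAt s h
  -- inner-product bound for the `B` part
  have hB : ∀ s, ⟪eqE m (B s), w s⟫ ≤ C3 * ‖w s‖ ^ 2 := by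
    intro s
    have hmap : (eqE m) (B s) = (-ε) • (eqE m (Lδ (uδ s) - Lδ (u0 s)))
        + (-(1/ε)) • (eqE m ((fun j => deriv W (uδ s j)) - (fun j => deriv W (u0 s j))))
        + (-γ) • (eqE m (Λ0 (uδ s - ω • ones m) - Λ0 (u0 s - ω • ones m)))
        + (-(M * (dip m c (uδ s - ω • ones m) (ones m)
            - dip m c (u0 s - ω • ones m) (ones m)))) • (eqE m (ones m)) := by
      simp [hBdef, map_add, map_smul]
    rw [hmap]
    rw [inner_add_left, inner_add_left, inner_add_left,
      real_inner_smul_left, real_inner_smul_left, real_inner_smul_left, real_inner_smul_left]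
    -- term 1
    have hL : Lδ (uδ s) - Lδ (u0 s) = Lδ (uδ s - u0 s) := (map_sub Lδ _ _).symm
    have h1 : 0 ≤ ⟪eqE m (Lδ (uδ s) - Lδ (u0 s)), w s⟫ := by
      rw [hL, hws s]
      have := hLδpsd (uδ s - u0 s)
      rw [dip_eqE] at this
      nlinarith
    -- term 3
    have hΛ : Λ0 (uδ s - ω • ones m) - Λ0 (u0 s - ω • ones m) = Λ0 (uδ s - u0 s) := by
      rw [← map_sub]; congr 1; abel
    have h3 : 0 ≤ ⟪eqE m (Λ0 (uδ s - ω • ones m) - Λ0 (u0 s - ω • ones m)), w s⟫ := by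
      rw [hΛ, hws s]
      have := hΛ0psd (uδ s - u0 s)
      rw [dip_eqE] at this
      nlinarith
    -- term 4
    have hdip : dip m c (uδ s - ω • ones m) (ones m) - dip m c (u0 s - ω • ones m) (ones m)
        = dip m c (uδ s - u0 s) (ones m) := by
      rw [← dip_sub_left]; congr 1; abel
    have h4 : -(M * (dip m c (uδ s - ω • ones m) (ones m)
          - dip m c (u0 s - ω • ones m) (ones m))) * ⟪eqE m (ones m), w s⟫ ≤ 0 := by
      rw [hdip, dip_eqE, hws s, real_inner_comm (eqE m (ones m))]
      nlinarith [mul_nonneg (mul_nonneg hM.le hc.le)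
        (sq_nonneg (inner ℝ (eqE m (ones m)) (eqE m (uδ s - u0 s)) : ℝ)),
        mul_nonneg (mul_nonneg hM.le hc.le)
        (sq_nonneg (inner ℝ (eqE m (uδ s - u0 s)) (eqE m (ones m)) : ℝ))]
    -- term 2
    have h2 : (-(1/ε)) * ⟪eqE m ((fun j => deriv W (uδ s j)) - (fun j => deriv W (u0 s j))),
        w s⟫ ≤ (LW / ε) * ‖w s‖ ^ 2 := by
      have hin : ⟪eqE m ((fun j => deriv W (uδ s j)) - (fun j => deriv W (u0 s j))), w s⟫
          = ∑ j, (deriv W (uδ s j) - deriv W (u0 s j)) * (uδ s j - u0 s j) := by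
        rw [hws s, inner_eqE]
        simp
      have hww : ‖w s‖ ^ 2 = ∑ j, (uδ s j - u0 s j) * (uδ s j - u0 s j) := by
        rw [← real_inner_self_eq_norm_sq, hws s, inner_eqE]
        simp
      have hsum : -(∑ j, (deriv W (uδ s j) - deriv W (u0 s j)) * (uδ s j - u0 s j))
          ≤ LW * ∑ j, (uδ s j - u0 s j) * (uδ s j - u0 s j) := by
        rw [← Finset.sum_neg_distrib, Finset.mul_sum]
        apply Finset.sum_le_sum
        intro j _
        have h1 := hW' (uδ s j) (u0 s j)
        have h2 : -((deriv W (uδ s j) - deriv W (u0 s j)) * (uδ s j - u0 s j))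
            ≤ |deriv W (uδ s j) - deriv W (u0 s j)| * |uδ s j - u0 s j| := by
          rw [← abs_mul]
          exact neg_le_abs _
        calc -((deriv W (uδ s j) - deriv W (u0 s j)) * (uδ s j - u0 s j))
            ≤ |deriv W (uδ s j) - deriv W (u0 s j)| * |uδ s j - u0 s j| := h2
          _ ≤ (LW * |uδ s j - u0 s j|) * |uδ s j - u0 s j| := by
              apply mul_le_mul_of_nonneg_right h1 (abs_nonneg _)
          _ = LW * ((uδ s j - u0 s j) * (uδ s j - u0 s j)) := by
              rw [mul_assoc, ← abs_mul, abs_mul_self]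
      rw [hin, hww]
      have hε' : 0 < 1/ε := by positivity
      calc (-(1/ε)) * (∑ j, (deriv W (uδ s j) - deriv W (u0 s j)) * (uδ s j - u0 s j))
          = (1/ε) * (-(∑ j, (deriv W (uδ s j) - deriv W (u0 s j)) * (uδ s j - u0 s j))) := by ring
        _ ≤ (1/ε) * (LW * ∑ j, (uδ s j - u0 s j) * (uδ s j - u0 s j)) := by
            apply mul_le_mul_of_nonneg_left hsum hε'.le
        _ = (LW / ε) * ∑ j, (uδ s j - u0 s j) * (uδ s j - u0 s j) := by ring
    -- combine
    have hKM : LW / ε ≤ C3 := by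
      have h2' : 0 ≤ γ * K := mul_nonneg hγ.le hK
      have h3' : 0 ≤ M * (c * m) := by positivity
      simp only [hC3def]; linarith
    have hwsq : 0 ≤ ‖w s‖ ^ 2 := sq_nonneg _
    linarith [mul_nonneg hε.le h1, mul_nonneg hγ.le h3,
      mul_le_mul_of_nonneg_right hKM hwsq, h2, h4]
  -- norm bound for the `A` part
  have hA : ∀ s ∈ Set.Icc (0:ℝ) T, ‖eqE m (A s)‖ ≤ E' := by
    intro s hs
    have hX : ‖eqE m (Lδ (u0 s) - L0 (u0 s))‖ ≤ Cb * δ ^ 2 / Real.sqrt c := by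
      have := hLclose s hs
      rw [dnorm_eqE hc] at this
      rw [le_div_iff₀ hsc]
      linarith
    have hv : ‖eqE m (uδ s - ω • ones m)‖ ≤ R / Real.sqrt c := by
      have := hubdd s hs
      rw [dnorm_eqE hc] at this
      rw [le_div_iff₀ hsc]
      linarith
    have hY : ‖eqE m (Λδ (uδ s - ω • ones m) - Λ0 (uδ s - ω • ones m))‖
        ≤ Ca * δ ^ 2 * (R / Real.sqrt c) := by
      have h1 := hΛclose (uδ s - ω • ones m)
      rw [dnorm_eqE hc, dnorm_eqE hc] at h1
      have h2 : ‖eqE m (Λδ (uδ s - ω • ones m) - Λ0 (uδ s - ω • ones m))‖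
          ≤ Ca * δ ^ 2 * ‖eqE m (uδ s - ω • ones m)‖ := by
        have := mul_le_mul_of_nonneg_left h1 (le_of_lt (inv_pos.mpr hsc))
        rw [← mul_assoc, inv_mul_cancel₀ hsc.ne', one_mul] at this
        calc ‖eqE m (Λδ (uδ s - ω • ones m) - Λ0 (uδ s - ω • ones m))‖
            = (Real.sqrt c)⁻¹ * (Real.sqrt c * ‖eqE m (Λδ (uδ s - ω • ones m)
                - Λ0 (uδ s - ω • ones m))‖) := by
              rw [← mul_assoc, inv_mul_cancel₀ hsc.ne', one_mul]
          _ ≤ (Real.sqrt c)⁻¹ * (Ca * δ ^ 2 * (Real.sqrt c * ‖eqE m (uδ s - ω • ones m)‖)) := by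
              apply mul_le_mul_of_nonneg_left h1 (le_of_lt (inv_pos.mpr hsc))
          _ = Ca * δ ^ 2 * ‖eqE m (uδ s - ω • ones m)‖ := by
              field_simp
      calc ‖eqE m (Λδ (uδ s - ω • ones m) - Λ0 (uδ s - ω • ones m))‖
          ≤ Ca * δ ^ 2 * ‖eqE m (uδ s - ω • ones m)‖ := h2
        _ ≤ Ca * δ ^ 2 * (R / Real.sqrt c) := by
            apply mul_le_mul_of_nonneg_left hv (by positivity)
    have hnorm : ‖eqE m (A s)‖ ≤ ε * (Cb * δ ^ 2 / Real.sqrt c)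
        + γ * (Ca * δ ^ 2 * (R / Real.sqrt c)) := by
      have hmap : eqE m (A s) = (-ε) • eqE m (Lδ (u0 s) - L0 (u0 s))
          + (-γ) • eqE m (Λδ (uδ s - ω • ones m) - Λ0 (uδ s - ω • ones m)) := by
        simp [hAdef, map_add, map_smul]
      rw [hmap]
      calc ‖(-ε) • eqE m (Lδ (u0 s) - L0 (u0 s))
            + (-γ) • eqE m (Λδ (uδ s - ω • ones m) - Λ0 (uδ s - ω • ones m))‖
          ≤ ‖(-ε) • eqE m (Lδ (u0 s) - L0 (u0 s))‖
            + ‖(-γ) • eqE m (Λδ (uδ s - ω • ones m) - Λ0 (uδ s - ω • ones m))‖ :=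
            norm_add_le _ _
        _ = ε * ‖eqE m (Lδ (u0 s) - L0 (u0 s))‖
            + γ * ‖eqE m (Λδ (uδ s - ω • ones m) - Λ0 (uδ s - ω • ones m))‖ := by
            rw [norm_smul, norm_smul, Real.norm_eq_abs, Real.norm_eq_abs,
              abs_neg, abs_neg, abs_of_pos hε, abs_of_pos hγ]
        _ ≤ ε * (Cb * δ ^ 2 / Real.sqrt c) + γ * (Ca * δ ^ 2 * (R / Real.sqrt c)) := by
            apply add_le_add
            · exact mul_le_mul_of_nonneg_left hX hε.le
            · exact mul_le_mul_of_nonneg_left hY hγ.le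
    calc ‖eqE m (A s)‖ ≤ ε * (Cb * δ ^ 2 / Real.sqrt c)
        + γ * (Ca * δ ^ 2 * (R / Real.sqrt c)) := hnorm
      _ = E' := by rw [hE'def]; field_simp
  -- Grönwall
  set F : ℝ → ℝ := fun x => if uδ x - u0 x = 0 then ‖eqE m (A x)‖
    else ⟪eqE m (B x + A x), w x⟫ / ‖w x‖ with hFdef
  have hcont : ContinuousOn (fun s => ‖w s‖) (Set.Icc (0:ℝ) T) := by
    apply ContinuousOn.norm
    intro x hx
    exact ((hw' x hx).continuousAt).continuousWithinAt
  have hslope : ∀ x ∈ Set.Ico (0:ℝ) T, ∀ r, F x < r →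
      ∃ᶠ z in nhdsWithin x (Set.Ioi x), (z - x)⁻¹ * (‖w z‖ - ‖w x‖) < r := by
    intro x hx r hr
    have hxIcc : x ∈ Set.Icc (0:ℝ) T := ⟨hx.1, hx.2.le⟩
    by_cases h0 : uδ x - u0 x = 0
    · rw [hFdef] at hr
      simp only [if_pos h0] at hr
      have hB0 : B x = 0 := by
        have hux : uδ x = u0 x := by rwa [sub_eq_zero] at h0
        simp [hBdef, hux]
      have : eqE m (B x + A x) = eqE m (A x) := by rw [hB0, zero_add]
      have hd := (hw' x hxIcc).hasDerivWithinAt (s := Set.Ici x)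
      rw [this] at hd
      exact hd.liminf_right_slope_norm_le hr
    · have hwx : w x ≠ 0 := by
        rw [hwdef]
        simp only [ne_eq, map_eq_zero_iff _ (eqE m).injective]
        exact h0
      have hnx : (0:ℝ) < ‖w x‖ := norm_pos_iff.mpr hwx
      have hip : (0:ℝ) < ⟪w x, w x⟫ := by
        rw [real_inner_self_eq_norm_sq]; positivity
      have hD : HasDerivAt (fun s => ‖w s‖) (⟪eqE m (B x + A x), w x⟫ / ‖w x‖) x := by
        have hinn : HasDerivAt (fun s => ⟪w s, w s⟫)
            (⟪w x, eqE m (B x + A x)⟫ + ⟪eqE m (B x + A x), w x⟫) x :=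
          HasDerivAt.inner ℝ (hw' x hxIcc) (hw' x hxIcc)
        have hsqrt := (Real.hasDerivAt_sqrt hip.ne').comp x hinn
        have hfun : (Real.sqrt ∘ fun s => ⟪w s, w s⟫) = fun s => ‖w s‖ := by
          funext s
          show Real.sqrt (inner ℝ (w s) (w s) : ℝ) = ‖w s‖
          rw [real_inner_self_eq_norm_sq, Real.sqrt_sq (norm_nonneg _)]
        rw [hfun] at hsqrt
        refine HasDerivAt.congr_deriv hsqrt ?_
        rw [real_inner_comm (w x) (eqE m (B x + A x))]
        rw [real_inner_self_eq_norm_sq, Real.sqrt_sq (norm_nonneg _)]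
        field_simp
        ring
      rw [hFdef] at hr
      simp only [if_neg h0] at hr
      have htend := hasDerivAt_iff_tendsto_slope.mp hD
      have hmono : nhdsWithin x (Set.Ioi x) ≤ nhdsWithin x {x}ᶜ := by
        apply nhdsWithin_mono
        intro z hz
        exact ne_of_gt hz
      have := (htend.mono_left hmono).eventually_lt_const hr
      apply this.frequently.mono
      intro z hz
      rwa [slope_def_field, div_eq_inv_mul] at hz
  have hbound : ∀ x ∈ Set.Ico (0:ℝ) T, F x ≤ C3 * ‖w x‖ + E' := by
    intro x hx
    have hxIcc : x ∈ Set.Icc (0:ℝ) T := ⟨hx.1, hx.2.le⟩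
    by_cases h0 : uδ x - u0 x = 0
    · rw [hFdef]
      simp only [if_pos h0]
      have hwx : ‖w x‖ = 0 := by
        rw [hws x, h0, map_zero, norm_zero]
      rw [hwx, mul_zero, zero_add]
      exact hA x hxIcc
    · rw [hFdef]
      simp only [if_neg h0]
      have hwx : w x ≠ 0 := by
        rw [hws x]
        simp only [ne_eq, map_eq_zero_iff _ (eqE m).injective]
        exact h0
      have hnx : (0:ℝ) < ‖w x‖ := norm_pos_iff.mpr hwx
      rw [div_le_iff₀ hnx]
      have hsplit : ⟪eqE m (B x + A x), w x⟫ = ⟪eqE m (B x), w x⟫ + ⟪eqE m (A x), w x⟫ := by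
        rw [map_add, inner_add_left]
      rw [hsplit]
      have hBb := hB x
      have hAb : ⟪eqE m (A x), w x⟫ ≤ E' * ‖w x‖ := by
        calc ⟪eqE m (A x), w x⟫ ≤ ‖eqE m (A x)‖ * ‖w x‖ := real_inner_le_norm _ _
          _ ≤ E' * ‖w x‖ := mul_le_mul_of_nonneg_right (hA x hxIcc) (norm_nonneg _)
      nlinarith
  have ha0 : ‖w 0‖ ≤ 0 := by
    rw [hws 0, hinit]
    simp
  have hgron := le_gronwallBound_of_liminf_deriv_right_le hcont hslope ha0 hbound
  intro t ht
  have hgt := hgron t ht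
  rw [gronwallBound_of_K_ne_0 hC3.ne'] at hgt
  rw [dnorm_eqE hc]
  have hwt : ‖eqE m (uδ t - u0 t)‖ = ‖w t‖ := by rw [hws t]
  rw [hwt]
  have h2 : Real.sqrt c * ‖w t‖ ≤ Real.sqrt c * (0 * Real.exp (C3 * (t - 0))
      + E' / C3 * (Real.exp (C3 * (t - 0)) - 1)) :=
    mul_le_mul_of_nonneg_left hgt hsc.le
  calc Real.sqrt c * ‖w t‖
      ≤ Real.sqrt c * (0 * Real.exp (C3 * (t - 0)) + E' / C3 * (Real.exp (C3 * (t - 0)) - 1)) := h2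
    _ = (ε * Cb + γ * Ca * R) * δ ^ 2 / C3 * (Real.exp (C3 * t) - 1) := by
        rw [sub_zero, hE'def]
        field_simp
        ring
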